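/- Let G be a (K_4, K_4[n])-saturated graph on parts X_1 ∪ X_2 ∪ X_3 ∪ X_4 with n ≥ 3, and let v be a vertex of degree exactly 4. Then v has exactly one neighbour in each of two parts and exactly two neighbours in one part; the neighbourhood of v induces a path whose endpoints are the two vertices lying in the same part; and every neighbour of v has degree at least n − 2. -/

import Mathlib

open SimpleGraph

/-- The blow-up `H[n]` of a graph `H` onto parts of size `n`: each vertex of `H` is
replaced by an independent set of size `n`, each edge by a complete bipartite graph. -/
def blowup {V : Type*} (H : SimpleGraph V) (n : ℕ) : SimpleGraph (V × Fin n) :=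
  SimpleGraph.comap Prod.fst H

/-- `f` selects one vertex in each part of the blow-up, forming a partite copy of `H` in `G`. -/
def IsPartiteCopy {V : Type*} {n : ℕ} (H : SimpleGraph V) (G : SimpleGraph (V × Fin n))
    (f : V → Fin n) : Prop :=
  ∀ ⦃u v : V⦄, H.Adj u v → G.Adj (u, f u) (v, f v)

/-- `G ⊆ H[n]` is `(H,H[n])`-partite-saturated: it has no partite copy of `H`, but adding
any edge of `H[n]` not in `G` creates a partite copy of `H`. -/
def PartiteSaturated {V : Type*} {n : ℕ} (H : SimpleGraph V)
    (G : SimpleGraph (V × Fin n)) : Prop :=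
  G ≤ blowup H n ∧ (¬ ∃ f, IsPartiteCopy H G f) ∧
    ∀ ⦃x y : V × Fin n⦄, (blowup H n).Adj x y → ¬ G.Adj x y →
      ∃ f, IsPartiteCopy H (G ⊔ SimpleGraph.fromEdgeSet {s(x, y)}) f

/-- The degree of a vertex. -/
noncomputable def deg {α : Type*} (G : SimpleGraph α) (v : α) : ℕ := (G.neighborSet v).ncard

/-- `G ⊆ K_r[n]` is `(K_r,K_r[n])`-saturated: `G` is `K_r`-free but adding any edge of
`K_r[n]` not in `G` creates a copy of `K_r`. -/
def CliqueSaturated (r n : ℕ) (G : SimpleGraph (Fin r × Fin n)) : Prop :=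
  G ≤ blowup (⊤ : SimpleGraph (Fin r)) n ∧ G.CliqueFree r ∧
    ∀ ⦃x y : Fin r × Fin n⦄, (blowup (⊤ : SimpleGraph (Fin r)) n).Adj x y → ¬ G.Adj x y →
      ¬ (G ⊔ SimpleGraph.fromEdgeSet {s(x, y)}).CliqueFree r

variable {n : ℕ} {G : SimpleGraph (Fin 4 × Fin n)}

lemma adj_fst (hG : CliqueSaturated 4 n G) {x y : Fin 4 × Fin n} (h : G.Adj x y) :
    x.1 ≠ y.1 := by
  have := hG.1 h
  simpa [blowup] using this

lemma sat_pair (hG : CliqueSaturated 4 n G) {v u : Fin 4 × Fin n}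
    (hne : u.1 ≠ v.1) (hnadj : ¬ G.Adj v u) :
    ∃ x y, G.Adj x y ∧ G.Adj v x ∧ G.Adj v y ∧ G.Adj u x ∧ G.Adj u y := by
  obtain ⟨hle, hfree, hsat⟩ := hG
  have hb : (blowup (⊤ : SimpleGraph (Fin 4)) n).Adj v u := by
    simpa [blowup] using hne.symm
  have hvu : v ≠ u := fun h => hne (h ▸ rfl)
  have h4 := hsat hb hnadj
  rw [CliqueFree] at h4
  push_neg at h4
  obtain ⟨t, ht⟩ := h4
  set G' := G ⊔ SimpleGraph.fromEdgeSet {s(v,u)} with hG'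
  have hedge : ∀ {x y : Fin 4 × Fin n}, G'.Adj x y →
      G.Adj x y ∨ (x = v ∧ y = u) ∨ (x = u ∧ y = v) := by
    intro x y h
    rcases h with h | h
    · exact Or.inl h
    · rw [SimpleGraph.fromEdgeSet_adj] at h
      simp only [Set.mem_singleton_iff, Sym2.eq_iff] at h
      tauto
  have hvt : v ∈ t := by
    by_contra hv
    refine hfree t ⟨fun x hx y hy hxy => ?_, ht.2⟩
    rcases hedge (ht.1 hx hy hxy) with h | ⟨h1, _⟩ | ⟨_, h2⟩
    · exact h
    · exact absurd (h1 ▸ hx) (by simpa using hv)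
    · exact absurd (h2 ▸ hy) (by simpa using hv)
  have hut : u ∈ t := by
    by_contra hu
    refine hfree t ⟨fun x hx y hy hxy => ?_, ht.2⟩
    rcases hedge (ht.1 hx hy hxy) with h | ⟨_, h2⟩ | ⟨h1, _⟩
    · exact h
    · exact absurd (h2 ▸ hy) (by simpa using hu)
    · exact absurd (h1 ▸ hx) (by simpa using hu)
  have hcard : ((t.erase v).erase u).card = 2 := by
    rw [Finset.card_erase_of_mem (Finset.mem_erase.2 ⟨hvu.symm, hut⟩),
      Finset.card_erase_of_mem hvt, ht.2]
  obtain ⟨x, y, hxy, hs⟩ := Finset.card_eq_two.1 hcard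
  have hx : x ∈ (t.erase v).erase u := hs ▸ Finset.mem_insert_self _ _
  have hy : y ∈ (t.erase v).erase u := hs ▸ (by simp)
  obtain ⟨hxu, hxv, hxt⟩ : x ≠ u ∧ x ≠ v ∧ x ∈ t := by
    simp only [Finset.mem_erase] at hx; tauto
  obtain ⟨hyu, hyv, hyt⟩ : y ≠ u ∧ y ≠ v ∧ y ∈ t := by
    simp only [Finset.mem_erase] at hy; tauto
  have key : ∀ {p q : Fin 4 × Fin n}, p ∈ t → q ∈ t → p ≠ q → (p ≠ v ∨ q ≠ u) →
      (p ≠ u ∨ q ≠ v) → G.Adj p q := by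
    intro p q hp hq hpq h1 h2
    rcases hedge (ht.1 hp hq hpq) with h | ⟨e1, e2⟩ | ⟨e1, e2⟩
    · exact h
    · rcases h1 with h1 | h1 <;> [exact absurd e1 h1; exact absurd e2 h1]
    · rcases h2 with h2 | h2 <;> [exact absurd e1 h2; exact absurd e2 h2]
  exact ⟨x, y, key hxt hyt hxy (Or.inl hxv) (Or.inl hxu),
    key hvt hxt hxv.symm (Or.inr hxu) (Or.inl hvu),
    key hvt hyt hyv.symm (Or.inr hyu) (Or.inl hvu),
    key hut hxt hxu.symm (Or.inl hvu.symm) (Or.inr hxv),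
    key hut hyt hyu.symm (Or.inl hvu.symm) (Or.inr hyv)⟩

lemma no_triangle (hG : CliqueSaturated 4 n G) {v x y z : Fin 4 × Fin n}
    (hvx : G.Adj v x) (hvy : G.Adj v y) (hvz : G.Adj v z)
    (hxy : G.Adj x y) (hyz : G.Adj y z) (hxz : G.Adj x z) : False := by
  apply hG.2.1 {v, x, y, z}
  have h1 : G.IsNClique 1 {z} := isNClique_singleton.2 rfl
  have h2 : G.IsNClique 2 (insert y {z}) := h1.insert (by simpa using hyz)
  have h3 : G.IsNClique 3 (insert x (insert y {z})) := h2.insert (by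
    intro b hb; simp at hb; rcases hb with rfl | rfl <;> assumption)
  exact h3.insert (by intro b hb; simp at hb; rcases hb with rfl | rfl | rfl <;> assumption)

lemma fin4_cases : ∀ q : Fin 4, q = 0 ∨ q = 1 ∨ q = 2 ∨ q = 3 := by decide

lemma fin4_cover : ∀ (p i x y w : Fin 4), p ≠ i → x ≠ p → x ≠ i → y ≠ p → y ≠ i →
    x ≠ y → w ≠ p → w ≠ i → w = x ∨ w = y := by decide

lemma fin4_fourth : ∀ (a b c : Fin 4), a ≠ b → a ≠ c → b ≠ c →
    ∃ d : Fin 4, d ≠ a ∧ d ≠ b ∧ d ≠ c := by decide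

/-- In a `(K_4,K_4[n])`-saturated graph with `n ≥ 3`, a vertex `v` of degree exactly `4`
has one neighbour in each of two parts and two neighbours in one part; its neighbourhood
induces a path beginning and ending with the two vertices in the same part; and all
neighbours of `v` have degree at least `n - 2`. -/
theorem stmt_1 (n : ℕ) (hn : 3 ≤ n) (G : SimpleGraph (Fin 4 × Fin n))
    (hG : CliqueSaturated 4 n G) (v : Fin 4 × Fin n) (hv : deg G v = 4) :
    (∃ a b c d : Fin 4 × Fin n,
      G.neighborSet v = {a, b, c, d} ∧
      -- `a` and `d` lie in the same part, `b` and `c` each in their own part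
      a.1 = d.1 ∧ a ≠ d ∧ a.1 ≠ b.1 ∧ a.1 ≠ c.1 ∧ b.1 ≠ c.1 ∧
      -- the neighbourhood induces the path `a - b - c - d`
      G.Adj a b ∧ G.Adj b c ∧ G.Adj c d ∧
      ¬ G.Adj a c ∧ ¬ G.Adj b d ∧ ¬ G.Adj a d) ∧
    ∀ w ∈ G.neighborSet v, n - 2 ≤ deg G w := by
  classical
  set p := v.1 with hp
  set N := G.neighborFinset v with hNdef
  have hN : N.card = 4 := by
    rw [hNdef, neighborFinset_def, ← Set.ncard_eq_toFinset_card']; exact hv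
  have hmem : ∀ w, w ∈ N ↔ G.Adj v w := fun w => G.mem_neighborFinset v w
  have hfstp : ∀ w ∈ N, w.1 ≠ p := fun w hw => (adj_fst hG ((hmem w).1 hw)).symm
  set c : Fin 4 → ℕ := fun i => (N.filter fun w => w.1 = i).card with hc
  have hsum : c 0 + c 1 + c 2 + c 3 = 4 := by
    have := Finset.card_eq_sum_card_fiberwise
      (f := fun w : Fin 4 × Fin n => w.1) (s := N) (t := Finset.univ)
      (fun x _ => Finset.mem_univ _)
    rw [hN, Fin.sum_univ_four] at this
    exact this.symm
  have hcp : c p = 0 := by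
    rw [hc]
    simp only [Finset.card_eq_zero, Finset.filter_eq_empty_iff]
    exact fun w hw => hfstp w hw
  have hnonnbr : ∀ i : Fin 4, c i < n → ∃ t : Fin n, (i, t) ∉ N := by
    intro i hi
    by_contra h
    push_neg at h
    have : (Finset.univ : Finset (Fin n)).card ≤ c i := by
      apply Finset.card_le_card_of_injOn (fun t => ((i, t) : Fin 4 × Fin n))
      · intro t _
        exact Finset.mem_filter.2 ⟨h t, rfl⟩
      · intro t1 _ t2 _ h12
        exact congrArg Prod.snd h12
    rw [Finset.card_univ, Fintype.card_fin] at this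
    omega
  have pairN : ∀ u : Fin 4 × Fin n, u.1 ≠ p → u ∉ N →
      ∃ x y, x ∈ N ∧ y ∈ N ∧ x.1 ≠ u.1 ∧ y.1 ≠ u.1 ∧ x.1 ≠ y.1 ∧
        G.Adj x y ∧ G.Adj u x ∧ G.Adj u y := by
    intro u hu1 hu2
    obtain ⟨x, y, h1, h2, h3, h4, h5⟩ := sat_pair hG hu1 (fun h => hu2 ((hmem u).2 h))
    exact ⟨x, y, (hmem x).2 h2, (hmem y).2 h3, (adj_fst hG h4).symm,
      (adj_fst hG h5).symm, adj_fst hG h1, h1, h4, h5⟩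
  -- every part other than p contains a neighbour
  have hD : ∀ i : Fin 4, i ≠ p → 1 ≤ c i := by
    by_contra h
    push_neg at h
    obtain ⟨i, hip, hci⟩ := h
    have hci0 : c i = 0 := by omega
    have hfi : ∀ w ∈ N, w.1 ≠ i := by
      intro w hw hwi
      have : w ∈ N.filter fun w => w.1 = i := Finset.mem_filter.2 ⟨hw, hwi⟩
      have : 1 ≤ c i := Finset.card_pos.2 ⟨w, this⟩
      omega
    obtain ⟨t0, ht0⟩ := hnonnbr i (by omega)
    obtain ⟨x, y, hxN, hyN, hxi, hyi, hxy1, hxy, hux, huy⟩ := pairN (i, t0) hip ht0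
    have hcov : ∀ w ∈ N, w.1 = x.1 ∨ w.1 = y.1 := by
      intro w hw
      exact fin4_cover p i x.1 y.1 w.1 (Ne.symm hip) (hfstp x hxN) hxi (hfstp y hyN) hyi
        hxy1 (hfstp w hw) (hfi w hw)
    have h4 : c x.1 + c y.1 = 4 := by
      have hdisj : Disjoint (N.filter fun w => w.1 = x.1) (N.filter fun w => w.1 = y.1) := by
        rw [Finset.disjoint_left]
        intro w hw1 hw2
        exact hxy1 ((Finset.mem_filter.1 hw1).2 ▸ (Finset.mem_filter.1 hw2).2)
      have hun : (N.filter fun w => w.1 = x.1) ∪ (N.filter fun w => w.1 = y.1) = N := by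
        rw [← Finset.filter_or]
        exact Finset.filter_true_of_mem hcov
      have := Finset.card_union_of_disjoint hdisj
      rw [hun, hN] at this
      exact this.symm
    have final : ∀ a b : Fin 4, a ≠ b → (∀ w ∈ N, w.1 = a ∨ w.1 = b) → a ≠ p →
        c a ≤ 2 → False := by
      intro a b hab hcov' hap hca
      obtain ⟨t1, ht1⟩ := hnonnbr a (by omega)
      obtain ⟨x', y', hx'N, hy'N, hx'a, hy'a, hx'y', _, _, _⟩ := pairN (a, t1) hap ht1
      rcases hcov' x' hx'N with h1 | h1 <;> rcases hcov' y' hy'N with h2 | h2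
      · exact hx'a h1
      · exact hx'a h1
      · exact hy'a h2
      · exact hx'y' (h1.trans h2.symm)
    rcases (by omega : c x.1 ≤ 2 ∨ c y.1 ≤ 2) with h | h
    · exact final x.1 y.1 hxy1 hcov (hfstp x hxN) h
    · exact final y.1 x.1 hxy1.symm (fun w hw => (hcov w hw).symm) (hfstp y hyN) h
  have hle2 : ∀ i : Fin 4, c i ≤ 2 := by
    intro i
    rcases fin4_cases p with hp4 | hp4 | hp4 | hp4 <;>
      rcases fin4_cases i with rfl | rfl | rfl | rfl <;>
      rw [hp4] at hcp hD <;>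
      first
      | (have d0 := hD 0 (by decide); have d1 := hD 1 (by decide); have d2 := hD 2 (by decide);
         omega)
      | (have d0 := hD 0 (by decide); have d1 := hD 1 (by decide); have d3 := hD 3 (by decide);
         omega)
      | (have d0 := hD 0 (by decide); have d2 := hD 2 (by decide); have d3 := hD 3 (by decide);
         omega)
      | (have d1 := hD 1 (by decide); have d2 := hD 2 (by decide); have d3 := hD 3 (by decide);
         omega)
  -- pigeonhole: two neighbours in the same part
  obtain ⟨a, haN, d, hdN, had, hadfst⟩ :
      ∃ a ∈ N, ∃ d ∈ N, a ≠ d ∧ a.1 = d.1 := by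
    have hmaps : ∀ w ∈ N, w.1 ∈ Finset.univ.erase p := fun w hw =>
      Finset.mem_erase.2 ⟨hfstp w hw, Finset.mem_univ _⟩
    have hlt : (Finset.univ.erase p).card < N.card := by
      rw [Finset.card_erase_of_mem (Finset.mem_univ _), Finset.card_univ, Fintype.card_fin, hN]
      omega
    obtain ⟨a, ha, d, hd, h1, h2⟩ := Finset.exists_ne_map_eq_of_card_lt_of_maps_to hlt hmaps
    exact ⟨a, ha, d, hd, h1, h2⟩
  set j := a.1 with hj
  have hdj : d.1 = j := hadfst.symm
  have hjp : j ≠ p := hfstp a haN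
  have hadsub : ({a, d} : Finset (Fin 4 × Fin n)) ⊆ N.filter fun w => w.1 = j := by
    intro w hw
    rcases Finset.mem_insert.1 hw with rfl | hw
    · exact Finset.mem_filter.2 ⟨haN, rfl⟩
    · rw [Finset.mem_singleton.1 hw]
      exact Finset.mem_filter.2 ⟨hdN, hdj⟩
  have hfilj : (N.filter fun w => w.1 = j) = {a, d} := by
    refine (Finset.eq_of_subset_of_card_le hadsub ?_).symm
    rw [Finset.card_insert_of_notMem (by simpa using had), Finset.card_singleton]
    exact hle2 j
  have hfj : ∀ w ∈ N, w.1 = j → w = a ∨ w = d := by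
    intro w hw hwj
    have : w ∈ ({a, d} : Finset (Fin 4 × Fin n)) := hfilj ▸ Finset.mem_filter.2 ⟨hw, hwj⟩
    simpa using this
  -- the other two neighbours
  have hsdcard : (N \ {a, d}).card = 2 := by
    rw [Finset.card_sdiff_of_subset (hadsub.trans (Finset.filter_subset _ _)), hN,
      Finset.card_insert_of_notMem (by simpa using had), Finset.card_singleton]
  obtain ⟨b0, c0, hb0c0, hsd⟩ := Finset.card_eq_two.1 hsdcard
  have hb0N : b0 ∈ N := (Finset.mem_sdiff.1 (hsd ▸ Finset.mem_insert_self b0 {c0})).1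
  have hc0N : c0 ∈ N := (Finset.mem_sdiff.1 (hsd ▸ (by simp : c0 ∈ ({b0, c0} : Finset _)))).1
  have hb0ad : b0 ≠ a ∧ b0 ≠ d := by
    have := (Finset.mem_sdiff.1 (hsd ▸ Finset.mem_insert_self b0 {c0})).2
    simpa using this
  have hc0ad : c0 ≠ a ∧ c0 ≠ d := by
    have := (Finset.mem_sdiff.1 (hsd ▸ (by simp : c0 ∈ ({b0, c0} : Finset _)))).2
    simpa using this
  have hcov4 : ∀ w ∈ N, w = a ∨ w = d ∨ w = b0 ∨ w = c0 := by
    intro w hw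
    by_cases h1 : w = a
    · exact Or.inl h1
    by_cases h2 : w = d
    · exact Or.inr (Or.inl h2)
    have : w ∈ N \ {a, d} := Finset.mem_sdiff.2 ⟨hw, by simp [h1, h2]⟩
    rw [hsd] at this
    rcases Finset.mem_insert.1 this with h | h
    · exact Or.inr (Or.inr (Or.inl h))
    · exact Or.inr (Or.inr (Or.inr (Finset.mem_singleton.1 h)))
  have hb0j : b0.1 ≠ j := by
    intro h
    rcases hfj b0 hb0N h with h' | h' <;> [exact hb0ad.1 h'; exact hb0ad.2 h']
  have hc0j : c0.1 ≠ j := by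
    intro h
    rcases hfj c0 hc0N h with h' | h' <;> [exact hc0ad.1 h'; exact hc0ad.2 h']
  have hb0p : b0.1 ≠ p := hfstp b0 hb0N
  have hc0p : c0.1 ≠ p := hfstp c0 hc0N
  set k := b0.1 with hk
  set l := c0.1 with hl
  -- sums over three distinct parts
  have hsum3 : ∀ x y z : Fin 4, x ≠ y → x ≠ z → y ≠ z → c x + c y + c z ≤ 4 := by
    intro x y z h1 h2 h3
    rcases fin4_cases x with rfl | rfl | rfl | rfl <;>
      rcases fin4_cases y with rfl | rfl | rfl | rfl <;>
      rcases fin4_cases z with rfl | rfl | rfl | rfl <;>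
      first
      | exact absurd rfl h1
      | exact absurd rfl h2
      | exact absurd rfl h3
      | omega
  have hkl : k ≠ l := by
    intro h
    have hsubkl : ({b0, c0} : Finset (Fin 4 × Fin n)) ⊆ N.filter fun w => w.1 = k := by
      intro w hw
      rcases Finset.mem_insert.1 hw with rfl | hw
      · exact Finset.mem_filter.2 ⟨hb0N, rfl⟩
      · rw [Finset.mem_singleton.1 hw]
        exact Finset.mem_filter.2 ⟨hc0N, h.symm⟩
    have h2 : 2 ≤ c k := by
      have h' := Finset.card_le_card hsubkl
      rw [Finset.card_insert_of_notMem (by simpa using hb0c0), Finset.card_singleton] at h'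
      exact h'
    obtain ⟨i', hi'j, hi'k, hi'p⟩ := fin4_fourth j k p hb0j.symm hjp hb0p
    have hcj : 2 ≤ c j := by
      have h' := Finset.card_le_card hadsub
      rw [Finset.card_insert_of_notMem (by simpa using had), Finset.card_singleton] at h'
      exact h'
    have := hsum3 j k i' (Ne.symm hb0j) (Ne.symm hi'j) (Ne.symm hi'k)
    have := hD i' hi'p
    omega
  have hcj2 : c j = 2 := by
    have h' := Finset.card_le_card hadsub
    rw [Finset.card_insert_of_notMem (by simpa using had), Finset.card_singleton] at h'
    have h2 : 2 ≤ c j := h'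
    have := hle2 j
    omega
  have hck1 : c k = 1 ∧ c l = 1 := by
    have h1 := hsum3 j k l (Ne.symm hb0j) (Ne.symm hc0j) hkl
    have h2 := hD k hb0p
    have h3 := hD l hc0p
    omega
  have hfilk : (N.filter fun w => w.1 = k) = {b0} := by
    refine (Finset.eq_of_subset_of_card_le ?_ (by rw [Finset.card_singleton]; exact hck1.1.le)).symm
    intro w hw
    rw [Finset.mem_singleton.1 hw]
    exact Finset.mem_filter.2 ⟨hb0N, rfl⟩
  have hfill : (N.filter fun w => w.1 = l) = {c0} := by
    refine (Finset.eq_of_subset_of_card_le ?_ (by rw [Finset.card_singleton]; exact hck1.2.le)).symm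
    intro w hw
    rw [Finset.mem_singleton.1 hw]
    exact Finset.mem_filter.2 ⟨hc0N, rfl⟩
  have hfk : ∀ w ∈ N, w.1 = k → w = b0 := by
    intro w hw hwk
    have : w ∈ ({b0} : Finset (Fin 4 × Fin n)) := hfilk ▸ Finset.mem_filter.2 ⟨hw, hwk⟩
    simpa using this
  have hfl : ∀ w ∈ N, w.1 = l → w = c0 := by
    intro w hw hwl
    have : w ∈ ({c0} : Finset (Fin 4 × Fin n)) := hfill ▸ Finset.mem_filter.2 ⟨hw, hwl⟩
    simpa using this
  -- edge b0–c0 and adjacency of b0, c0 to everything in part j except a, d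
  have E1 : ∀ u : Fin 4 × Fin n, u.1 = j → u ≠ a → u ≠ d →
      G.Adj b0 u ∧ G.Adj c0 u ∧ G.Adj b0 c0 := by
    intro u huj hua hud
    have huN : u ∉ N := by
      intro h
      rcases hfj u h huj with h' | h' <;> [exact hua h'; exact hud h']
    obtain ⟨x, y, hxN, hyN, hxu, hyu, hxy1, hxy, hux, huy⟩ :=
      pairN u (huj ▸ hjp) huN
    have hxbc : x = b0 ∨ x = c0 := by
      rcases hcov4 x hxN with rfl | rfl | h | h
      · exact absurd huj.symm hxu
      · exact absurd (huj.trans hdj.symm).symm hxu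
      · exact Or.inl h
      · exact Or.inr h
    have hybc : y = b0 ∨ y = c0 := by
      rcases hcov4 y hyN with rfl | rfl | h | h
      · exact absurd huj.symm hyu
      · exact absurd (huj.trans hdj.symm).symm hyu
      · exact Or.inl h
      · exact Or.inr h
    rcases hxbc with rfl | rfl <;> rcases hybc with rfl | rfl
    · exact absurd rfl hxy1
    · exact ⟨hux.symm, huy.symm, hxy⟩
    · exact ⟨huy.symm, hux.symm, hxy.symm⟩
    · exact absurd rfl hxy1
  -- a chosen non-neighbour in part j
  obtain ⟨t2, ht2a, ht2d⟩ : ∃ t : Fin n, (j, t) ≠ a ∧ (j, t) ≠ d := by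
    have : ((Finset.univ : Finset (Fin n)) \ {a.2, d.2}).Nonempty := by
      rw [← Finset.card_pos]
      have h1 := Finset.le_card_sdiff ({a.2, d.2} : Finset (Fin n)) Finset.univ
      have h2 : ({a.2, d.2} : Finset (Fin n)).card ≤ 2 :=
        (Finset.card_insert_le _ _).trans (by simp)
      rw [Finset.card_univ, Fintype.card_fin] at h1
      omega
    obtain ⟨t, ht⟩ := this
    rw [Finset.mem_sdiff] at ht
    simp only [Finset.mem_insert, Finset.mem_singleton, not_or] at ht
    exact ⟨t, fun h => ht.2.1 (congrArg Prod.snd h), fun h => ht.2.2 (congrArg Prod.snd h)⟩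
  have hbc : G.Adj b0 c0 := (E1 (j, t2) rfl ht2a ht2d).2.2
  -- edges from parts k and l
  have E2 : ∀ u : Fin 4 × Fin n, u.1 = k → u ≠ b0 →
      ∃ x, (x = a ∨ x = d) ∧ G.Adj c0 x ∧ G.Adj u x ∧ G.Adj u c0 := by
    intro u huk hub
    have huN : u ∉ N := fun h => hub (hfk u h huk)
    obtain ⟨x, y, hxN, hyN, hxu, hyu, hxy1, hxy, hux, huy⟩ := pairN u (huk ▸ hb0p) huN
    have hxad : x = a ∨ x = d ∨ x = c0 := by
      rcases hcov4 x hxN with h | h | rfl | h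
      · exact Or.inl h
      · exact Or.inr (Or.inl h)
      · exact absurd huk.symm hxu
      · exact Or.inr (Or.inr h)
    have hyad : y = a ∨ y = d ∨ y = c0 := by
      rcases hcov4 y hyN with h | h | rfl | h
      · exact Or.inl h
      · exact Or.inr (Or.inl h)
      · exact absurd huk.symm hyu
      · exact Or.inr (Or.inr h)
    rcases hxad with rfl | rfl | rfl <;> rcases hyad with rfl | rfl | rfl
    · exact absurd rfl hxy1
    · exact absurd (show x.1 = y.1 by rw [hdj, ← hj]) hxy1
    · exact ⟨x, Or.inl rfl, hxy.symm, hux, huy⟩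
    · exact absurd (show x.1 = y.1 by rw [hdj, ← hj]) hxy1
    · exact absurd rfl hxy1
    · exact ⟨x, Or.inr rfl, hxy.symm, hux, huy⟩
    · exact ⟨y, Or.inl rfl, hxy, huy, hux⟩
    · exact ⟨y, Or.inr rfl, hxy, huy, hux⟩
    · exact absurd rfl hxy1
  have E3 : ∀ u : Fin 4 × Fin n, u.1 = l → u ≠ c0 →
      ∃ x, (x = a ∨ x = d) ∧ G.Adj b0 x ∧ G.Adj u x ∧ G.Adj u b0 := by
    intro u hul huc
    have huN : u ∉ N := fun h => huc (hfl u h hul)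
    obtain ⟨x, y, hxN, hyN, hxu, hyu, hxy1, hxy, hux, huy⟩ := pairN u (hul ▸ hc0p) huN
    have hxad : x = a ∨ x = d ∨ x = b0 := by
      rcases hcov4 x hxN with h | h | h | rfl
      · exact Or.inl h
      · exact Or.inr (Or.inl h)
      · exact Or.inr (Or.inr h)
      · exact absurd hul.symm hxu
    have hyad : y = a ∨ y = d ∨ y = b0 := by
      rcases hcov4 y hyN with h | h | h | rfl
      · exact Or.inl h
      · exact Or.inr (Or.inl h)
      · exact Or.inr (Or.inr h)
      · exact absurd hul.symm hyu
    rcases hxad with rfl | rfl | rfl <;> rcases hyad with rfl | rfl | rfl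
    · exact absurd rfl hxy1
    · exact absurd (show x.1 = y.1 by rw [hdj, ← hj]) hxy1
    · exact ⟨x, Or.inl rfl, hxy.symm, hux, huy⟩
    · exact absurd (show x.1 = y.1 by rw [hdj, ← hj]) hxy1
    · exact absurd rfl hxy1
    · exact ⟨x, Or.inr rfl, hxy.symm, hux, huy⟩
    · exact ⟨y, Or.inl rfl, hxy, huy, hux⟩
    · exact ⟨y, Or.inr rfl, hxy, huy, hux⟩
    · exact absurd rfl hxy1
  obtain ⟨t3, ht3⟩ : ∃ t : Fin n, (k, t) ≠ b0 := by
    have hne : ((Finset.univ : Finset (Fin n)) \ {b0.2}).Nonempty := by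
      rw [← Finset.card_pos]
      have h1 := Finset.le_card_sdiff ({b0.2} : Finset (Fin n)) Finset.univ
      rw [Finset.card_univ, Fintype.card_fin, Finset.card_singleton] at h1
      omega
    obtain ⟨t, ht⟩ := hne
    rw [Finset.mem_sdiff, Finset.mem_singleton] at ht
    exact ⟨t, fun h => ht.2 (congrArg Prod.snd h)⟩
  obtain ⟨t4, ht4⟩ : ∃ t : Fin n, (l, t) ≠ c0 := by
    have hne : ((Finset.univ : Finset (Fin n)) \ {c0.2}).Nonempty := by
      rw [← Finset.card_pos]
      have h1 := Finset.le_card_sdiff ({c0.2} : Finset (Fin n)) Finset.univ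
      rw [Finset.card_univ, Fintype.card_fin, Finset.card_singleton] at h1
      omega
    obtain ⟨t, ht⟩ := hne
    rw [Finset.mem_sdiff, Finset.mem_singleton] at ht
    exact ⟨t, fun h => ht.2 (congrArg Prod.snd h)⟩
  obtain ⟨xE2, hxE2ad, hc0x, _, _⟩ := E2 (k, t3) rfl ht3
  obtain ⟨xE3, hxE3ad, hb0x, _, _⟩ := E3 (l, t4) rfl ht4
  obtain ⟨A, D, hADne, hA1, hD1, hAN, hDN, hb0A, hADiff⟩ :
      ∃ A D : Fin 4 × Fin n, A ≠ D ∧ A.1 = j ∧ D.1 = j ∧ A ∈ N ∧ D ∈ N ∧ G.Adj b0 A ∧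
        (∀ w : Fin 4 × Fin n, (w = a ∨ w = d) ↔ (w = A ∨ w = D)) := by
    rcases hxE3ad with rfl | rfl
    · exact ⟨xE3, d, had, hj.symm, hdj, haN, hdN, hb0x, fun w => Iff.rfl⟩
    · exact ⟨xE3, a, Ne.symm had, hdj, hj.symm, hdN, haN, hb0x, fun w => or_comm⟩
  have hE2A : G.Adj c0 A ∨ G.Adj c0 D := by
    rcases (hADiff xE2).1 hxE2ad with rfl | rfl
    · exact Or.inl hc0x
    · exact Or.inr hc0x
  have hvA := (hmem A).1 hAN
  have hvD := (hmem D).1 hDN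
  have hvb0 := (hmem b0).1 hb0N
  have hvc0 := (hmem c0).1 hc0N
  have hnAC : ¬ G.Adj A c0 := fun h => no_triangle hG hvA hvb0 hvc0 hb0A.symm hbc h
  have hCD : G.Adj c0 D := by
    rcases hE2A with h | h
    · exact absurd h.symm hnAC
    · exact h
  have hnBD : ¬ G.Adj b0 D := fun h => no_triangle hG hvb0 hvc0 hvD hbc hCD h
  have hnAD : ¬ G.Adj A D := fun h => adj_fst hG h (hA1.trans hD1.symm)
  have hcov4' : ∀ w ∈ N, w = A ∨ w = D ∨ w = b0 ∨ w = c0 := by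
    intro w hw
    rcases hcov4 w hw with h | h | h | h
    · rcases (hADiff w).1 (Or.inl h) with h' | h'
      · exact Or.inl h'
      · exact Or.inr (Or.inl h')
    · rcases (hADiff w).1 (Or.inr h) with h' | h'
      · exact Or.inl h'
      · exact Or.inr (Or.inl h')
    · exact Or.inr (Or.inr (Or.inl h))
    · exact Or.inr (Or.inr (Or.inr h))
  have hsetN : G.neighborSet v = {A, b0, c0, D} := by
    ext w
    simp only [Set.mem_insert_iff, Set.mem_singleton_iff, SimpleGraph.mem_neighborSet]
    constructor
    · intro h
      rcases hcov4' w ((hmem w).2 h) with h' | h' | h' | h'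
      · exact Or.inl h'
      · exact Or.inr (Or.inr (Or.inr h'))
      · exact Or.inr (Or.inl h')
      · exact Or.inr (Or.inr (Or.inl h'))
    · intro h
      rcases h with rfl | rfl | rfl | rfl
      · exact (hmem _).1 hAN
      · exact (hmem _).1 hb0N
      · exact (hmem _).1 hc0N
      · exact (hmem _).1 hDN
  have degcount : ∀ (w : Fin 4 × Fin n) (i : Fin 4) (e1 e2 : Fin 4 × Fin n),
      (∀ t : Fin n, (i, t) ≠ e1 → (i, t) ≠ e2 → G.Adj w (i, t)) → n - 2 ≤ deg G w := by
    intro w i e1 e2 h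
    have hcard : ((Finset.univ : Finset (Fin n)) \ {e1.2, e2.2}).card ≤
        (G.neighborFinset w).card := by
      apply Finset.card_le_card_of_injOn (fun t => ((i, t) : Fin 4 × Fin n))
      · intro t ht
        rw [Finset.mem_coe, Finset.mem_sdiff, Finset.mem_insert, Finset.mem_singleton] at ht
        rw [Finset.mem_coe, SimpleGraph.mem_neighborFinset]
        exact h t (fun he => ht.2 (Or.inl (congrArg Prod.snd he)))
          (fun he => ht.2 (Or.inr (congrArg Prod.snd he)))
      · intro t1 _ t2 _ h12
        exact congrArg Prod.snd h12
    have h1 := Finset.le_card_sdiff ({e1.2, e2.2} : Finset (Fin n)) Finset.univ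
    have h2 : ({e1.2, e2.2} : Finset (Fin n)).card ≤ 2 :=
      (Finset.card_insert_le _ _).trans (by simp)
    rw [Finset.card_univ, Fintype.card_fin] at h1
    have hdw : deg G w = (G.neighborFinset w).card := by
      rw [deg, neighborFinset_def, ← Set.ncard_eq_toFinset_card']
    omega
  have suppB : ∀ t : Fin n, (j, t) ≠ A → (j, t) ≠ D → G.Adj b0 (j, t) := by
    intro t h1 h2
    have hnot : ¬((j, t) = a ∨ (j, t) = d) := by
      intro h
      rcases (hADiff (j, t)).1 h with h' | h'
      · exact h1 h'
      · exact h2 h'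
    exact (E1 (j, t) rfl (fun h => hnot (Or.inl h)) (fun h => hnot (Or.inr h))).1
  have suppC : ∀ t : Fin n, (j, t) ≠ A → (j, t) ≠ D → G.Adj c0 (j, t) := by
    intro t h1 h2
    have hnot : ¬((j, t) = a ∨ (j, t) = d) := by
      intro h
      rcases (hADiff (j, t)).1 h with h' | h'
      · exact h1 h'
      · exact h2 h'
    exact (E1 (j, t) rfl (fun h => hnot (Or.inl h)) (fun h => hnot (Or.inr h))).2.1
  have suppA : ∀ t : Fin n, (l, t) ≠ c0 → G.Adj A (l, t) := by
    intro t hne1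
    obtain ⟨x, hxad, hb0x', hux, hub⟩ := E3 (l, t) rfl hne1
    rcases (hADiff x).1 hxad with rfl | rfl
    · exact hux.symm
    · exact absurd hb0x' hnBD
  have suppD : ∀ t : Fin n, (k, t) ≠ b0 → G.Adj D (k, t) := by
    intro t hne1
    obtain ⟨x, hxad, hc0x', hux, hub⟩ := E2 (k, t) rfl hne1
    rcases (hADiff x).1 hxad with rfl | rfl
    · exact absurd hc0x'.symm hnAC
    · exact hux.symm
  refine ⟨⟨A, b0, c0, D, hsetN, hA1.trans hD1.symm, hADne, ?_, ?_, hkl,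
    hb0A.symm, hbc, hCD, hnAC, hnBD, hnAD⟩, ?_⟩
  · rw [hA1]; exact Ne.symm hb0j
  · rw [hA1]; exact Ne.symm hc0j
  · intro w hw
    rw [hsetN] at hw
    simp only [Set.mem_insert_iff, Set.mem_singleton_iff] at hw
    rcases hw with rfl | rfl | rfl | rfl
    · exact degcount w l c0 c0 (fun t h1 _ => suppA t h1)
    · exact degcount w j A D suppB
    · exact degcount w j A D suppC
    · exact degcount w k b0 b0 (fun t h1 _ => suppD t h1)
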